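/- In a monotonous quiver, a vertex X is phylogenetic if and only if X is normal and h(X) < ∞. -/

import Mathlib

universe u
variable {V : Type u} [Quiver V]

/-- An evolution of length `m` with vertex sequence `A 0, A 1, ..., A m`:
for each `k < m` there is an edge from `A (k+1)` to `A k`
(the paper's evolution `A 0 ← A 1 ← ⋯ ← A m`). -/
def IsEvol (A : ℕ → V) (m : ℕ) : Prop := ∀ k < m, Nonempty (A (k + 1) ⟶ A k)

/-- `Anc X Y` : `X` is an ancestor of `Y`, i.e. there is an evolution from `X` to `Y`. -/
def Anc (X Y : V) : Prop := ∃ (m : ℕ) (A : ℕ → V), IsEvol A m ∧ A 0 = X ∧ A m = Y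

/-- `X` and `Y` are isotypic. -/
def Isotypic (X Y : V) : Prop := Anc X Y ∧ Anc Y X

/-- A vertex is primitive if every ancestor of it is isotypic to it. -/
def Primitive (X : V) : Prop := ∀ B : V, Anc B X → Anc X B

/-- A full evolution for `X` : an evolution from a primitive vertex to `X`. -/
def IsFullEvol (A : ℕ → V) (m : ℕ) (X : V) : Prop :=
  IsEvol A m ∧ Primitive (A 0) ∧ A m = X

/-- The height of a vertex: the least length of a full evolution for it (`⊤` if none). -/
noncomputable def height (X : V) : ℕ∞ :=
  sInf {n : ℕ∞ | ∃ m : ℕ, n = (m : ℕ∞) ∧ ∃ A : ℕ → V, IsFullEvol A m X}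

/-- `A` is a critical ancestor of `B`. -/
def CritAnc (A B : V) : Prop :=
  height A < ⊤ ∧ ∃ (m : ℕ) (E : ℕ → V), 0 < m ∧ IsEvol E m ∧ E 0 = A ∧ E m = B ∧
    height (E 1) = height A + 1

/-- A vertex is normal if any two of its critical ancestors of equal height are isotypic. -/
def NormalVtx (B : V) : Prop :=
  ∀ A A' : V, CritAnc A B → CritAnc A' B → height A = height A' → Isotypic A A'

/-- The evolution `(A, m)` embeds in the evolution `(B, n)`. -/
def Embeds (A : ℕ → V) (m : ℕ) (B : ℕ → V) (n : ℕ) : Prop :=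
  m ≤ n ∧ ∃ r : ℕ → ℕ, (∀ k < m, r k < r (k + 1)) ∧ r m ≤ n ∧
    ∀ k ≤ m, Isotypic (A k) (B (r k))

/-- A universal evolution for `X`: a full evolution for `X` embedding in every
full evolution for `X`. -/
def IsUniversalEvol (A : ℕ → V) (m : ℕ) (X : V) : Prop :=
  IsFullEvol A m X ∧ ∀ (B : ℕ → V) (n : ℕ), IsFullEvol B n X → Embeds A m B n

/-- A vertex is phylogenetic if it admits a universal evolution. -/
def Phylogenetic (X : V) : Prop := ∃ (A : ℕ → V) (m : ℕ), IsUniversalEvol A m X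

/-- A quiver is monotonous if `h(A) ≥ h(B)` for every edge `A → B`. -/
def Monotonous (V : Type u) [Quiver V] : Prop :=
  ∀ A B : V, Nonempty (A ⟶ B) → height B ≤ height A

/-- A vertex `A` is regular if for every descendant `B` of `A` with `h(B) = h(A)`
there is an edge `B → A`. -/
def Regular (A : V) : Prop :=
  ∀ B : V, Anc A B → height B = height A → Nonempty (B ⟶ A)

/-- The clade of a vertex `A`: the full subquiver of descendants of `A`. -/
abbrev Clade (A : V) : Type u := {B : V // Anc A B}

instance (A : V) : Quiver (Clade A) := ⟨fun X Y => X.val ⟶ Y.val⟩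

attribute [local instance] Classical.propDecidable

theorem anc_refl (X : V) : Anc X X :=
  ⟨0, fun _ => X, fun k hk => absurd hk (Nat.not_lt_zero k), rfl, rfl⟩

theorem isotypic_refl (X : V) : Isotypic X X := ⟨anc_refl X, anc_refl X⟩

theorem isotypic_symm {X Y : V} (h : Isotypic X Y) : Isotypic Y X := ⟨h.2, h.1⟩

def spliceFun (A B : ℕ → V) (m : ℕ) : ℕ → V := fun k => if k ≤ m then A k else B (k - m)

theorem spliceFun_left {A B : ℕ → V} {m k : ℕ} (h : k ≤ m) : spliceFun A B m k = A k :=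
  if_pos h

theorem spliceFun_right {A B : ℕ → V} {m k : ℕ} (hAB : A m = B 0) (h : m ≤ k) :
    spliceFun A B m k = B (k - m) := by
  rcases eq_or_lt_of_le h with h | h
  · subst h
    show (if m ≤ m then A m else B (m - m)) = B (m - m)
    rw [if_pos le_rfl, hAB, Nat.sub_self]
  · exact if_neg (not_le.mpr h)

theorem spliceFun_isEvol {A B : ℕ → V} {m n : ℕ} (hA : IsEvol A m) (hB : IsEvol B n)
    (hAB : A m = B 0) : IsEvol (spliceFun A B m) (m + n) := by
  intro k hk
  by_cases hkm : k < m
  · rw [spliceFun_left (le_of_lt hkm), spliceFun_left hkm]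
    exact hA k hkm
  · push_neg at hkm
    rw [spliceFun_right hAB hkm, spliceFun_right hAB (le_trans hkm (Nat.le_succ k))]
    have h1 : k + 1 - m = (k - m) + 1 := by omega
    rw [h1]
    exact hB (k - m) (by omega)

theorem isEvol_shift {A : ℕ → V} {m : ℕ} (hA : IsEvol A m) (j ℓ : ℕ) (hℓ : j + ℓ ≤ m) :
    IsEvol (fun i => A (j + i)) ℓ := fun k hk => hA (j + k) (by omega)

theorem anc_of_evol {B : ℕ → V} {n : ℕ} (hE : IsEvol B n) {i k : ℕ} (hik : i ≤ k)
    (hk : k ≤ n) : Anc (B i) (B k) := by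
  refine ⟨k - i, fun t => B (i + t), isEvol_shift hE i (k - i) (by omega), rfl, ?_⟩
  show B (i + (k - i)) = B k
  rw [show i + (k - i) = k from by omega]

theorem anc_trans {X Y Z : V} (h1 : Anc X Y) (h2 : Anc Y Z) : Anc X Z := by
  obtain ⟨m, A, hA, hA0, hAm⟩ := h1
  obtain ⟨n, B, hB, hB0, hBn⟩ := h2
  have hAB : A m = B 0 := hAm.trans hB0.symm
  refine ⟨m + n, spliceFun A B m, spliceFun_isEvol hA hB hAB, ?_, ?_⟩
  · rw [spliceFun_left (Nat.zero_le m), hA0]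
  · rw [spliceFun_right hAB (Nat.le_add_right m n), Nat.add_sub_cancel_left, hBn]

theorem isotypic_trans {X Y Z : V} (h1 : Isotypic X Y) (h2 : Isotypic Y Z) : Isotypic X Z :=
  ⟨anc_trans h1.1 h2.1, anc_trans h2.2 h1.2⟩

theorem height_le_of_full {A : ℕ → V} {m : ℕ} {X : V} (h : IsFullEvol A m X) :
    height X ≤ (m : ℕ∞) := sInf_le ⟨m, rfl, A, h⟩

theorem exists_full_of_height_lt_top {X : V} (h : height X < ⊤) :
    ∃ (m : ℕ) (A : ℕ → V), IsFullEvol A m X ∧ height X = (m : ℕ∞) := by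
  by_cases hne : ∃ (m : ℕ) (A : ℕ → V), IsFullEvol A m X
  · obtain ⟨m0, A0, hfull0⟩ := hne
    have hS : {m : ℕ | ∃ A : ℕ → V, IsFullEvol A m X}.Nonempty := ⟨m0, A0, hfull0⟩
    obtain ⟨A, hA⟩ := Nat.sInf_mem hS
    refine ⟨_, A, hA, le_antisymm (height_le_of_full hA) ?_⟩
    unfold height
    refine le_sInf ?_
    rintro n ⟨m, rfl, B, hB⟩
    have : sInf {m : ℕ | ∃ A : ℕ → V, IsFullEvol A m X} ≤ m :=
      Nat.sInf_le (show m ∈ {m : ℕ | ∃ A : ℕ → V, IsFullEvol A m X} from ⟨B, hB⟩)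
    exact_mod_cast this
  · exfalso
    have hempty : {n : ℕ∞ | ∃ m : ℕ, n = (m : ℕ∞) ∧ ∃ A : ℕ → V, IsFullEvol A m X} = ∅ := by
      ext n
      simp only [Set.mem_setOf_eq, Set.mem_empty_iff_false, iff_false]
      rintro ⟨m, rfl, A, hA⟩
      exact hne ⟨m, A, hA⟩
    have : height X = ⊤ := by rw [height, hempty, sInf_empty]
    rw [this] at h
    exact absurd h (lt_irrefl ⊤)

theorem primitive_height {X : V} (h : Primitive X) : height X = 0 := by
  have h0 : height X ≤ ((0 : ℕ) : ℕ∞) :=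
    height_le_of_full (A := fun _ => X) (m := 0)
      ⟨fun k hk => absurd hk (Nat.not_lt_zero k), h, rfl⟩
  exact le_antisymm (by exact_mod_cast h0) zero_le

theorem anc_height_le (hmon : Monotonous V) {X Y : V} (h : Anc X Y) :
    height X ≤ height Y := by
  obtain ⟨m, A, hA, hA0, hAm⟩ := h
  rw [← hA0, ← hAm]
  suffices H : ∀ k, k ≤ m → height (A 0) ≤ height (A k) from H m le_rfl
  intro k
  induction k with
  | zero => intro _; exact le_rfl
  | succ k ih =>
    intro hk
    exact (ih (by omega)).trans (hmon _ _ (hA k (by omega)))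

theorem isotypic_height (hmon : Monotonous V) {X Y : V} (h : Isotypic X Y) :
    height X = height Y :=
  le_antisymm (anc_height_le hmon h.1) (anc_height_le hmon h.2)

theorem height_prefix {B : ℕ → V} {n : ℕ} {X : V} (h : IsFullEvol B n X) {k : ℕ}
    (hk : k ≤ n) : height (B k) ≤ (k : ℕ∞) :=
  height_le_of_full ⟨fun i hi => h.1 i (lt_of_lt_of_le hi hk), h.2.1, rfl⟩

theorem height_step {Y Z : V} (e : Nonempty (Z ⟶ Y)) : height Z ≤ height Y + 1 := by
  by_cases hY : height Y < ⊤
  · obtain ⟨m, A, hA, hm⟩ := exists_full_of_height_lt_top hY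
    set B : ℕ → V := fun i => if i = 0 then Y else Z with hBdef
    have hB : IsEvol B 1 := by
      intro k hk
      interval_cases k
      simpa [hBdef] using e
    have hAB : A m = B 0 := by rw [hA.2.2]; simp [hBdef]
    have hfull : IsFullEvol (spliceFun A B m) (m + 1) Z := by
      refine ⟨spliceFun_isEvol hA.1 hB hAB, ?_, ?_⟩
      · rw [spliceFun_left (Nat.zero_le m)]; exact hA.2.1
      · rw [spliceFun_right hAB (Nat.le_succ m)]
        rw [show m + 1 - m = 1 from by omega]
        simp [hBdef]
    calc height Z ≤ ((m + 1 : ℕ) : ℕ∞) := height_le_of_full hfull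
      _ = height Y + 1 := by rw [hm]; push_cast; ring
  · have : height Y = ⊤ := by
      rcases eq_or_lt_of_le (le_top (a := height Y)) with h | h
      · exact h
      · exact absurd h hY
    rw [this]
    exact le_top

theorem short_heights {A : ℕ → V} {n : ℕ} {X : V} (hfull : IsFullEvol A n X)
    (hshort : height X = (n : ℕ∞)) {k : ℕ} (hk : k ≤ n) : height (A k) = (k : ℕ∞) := by
  have h1 : height (A k) ≤ (k : ℕ∞) := height_prefix hfull hk
  have h2 : height (A k) < ⊤ := lt_of_le_of_lt h1 (WithTop.coe_lt_top k)
  obtain ⟨j, S, hS, hj⟩ := exists_full_of_height_lt_top h2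
  have hSA : S j = (fun i => A (k + i)) 0 := hS.2.2
  have key : IsFullEvol (spliceFun S (fun i => A (k + i)) j) (j + (n - k)) X := by
    refine ⟨spliceFun_isEvol hS.1 (isEvol_shift hfull.1 k (n - k) (by omega)) hSA, ?_, ?_⟩
    · rw [spliceFun_left (Nat.zero_le j)]; exact hS.2.1
    · rw [spliceFun_right hSA (Nat.le_add_right _ _), Nat.add_sub_cancel_left]
      show A (k + (n - k)) = X
      rw [show k + (n - k) = n from by omega, hfull.2.2]
  have hle : height X ≤ ((j + (n - k) : ℕ) : ℕ∞) := height_le_of_full key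
  rw [hshort] at hle
  have hn : n ≤ j + (n - k) := by exact_mod_cast hle
  have hjk : j ≤ k := by exact_mod_cast hj ▸ h1
  have : j = k := by omega
  rw [hj, this]

theorem critAnc_of_jump {B : ℕ → V} {n : ℕ} {X : V} (hE : IsEvol B n) (hBn : B n = X)
    {r : ℕ} (hr : r < n) (h1 : height (B r) < ⊤)
    (h2 : height (B (r + 1)) = height (B r) + 1) : CritAnc (B r) X := by
  refine ⟨h1, n - r, fun i => B (r + i), by omega,
    isEvol_shift hE r (n - r) (by omega), rfl, ?_, h2⟩
  show B (r + (n - r)) = X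
  rw [show r + (n - r) = n from by omega, hBn]

theorem mono_of_strict {s : ℕ → ℕ} {m : ℕ} (h : ∀ k < m, s k < s (k + 1)) :
    ∀ a b, a ≤ b → b ≤ m → s a ≤ s b := by
  intro a b hab hbm
  induction b with
  | zero => rw [Nat.le_zero.mp hab]
  | succ b ih =>
    rcases Nat.lt_or_ge a (b + 1) with h' | h'
    · exact le_trans (ih (by omega) (by omega)) (le_of_lt (h b (by omega)))
    · rw [show a = b + 1 from by omega]

theorem jump_lemma (hmon : Monotonous V) {B : ℕ → V} {n : ℕ} {X : V}
    (hfull : IsFullEvol B n X) {j : ℕ} (hj : (j : ℕ∞) < height X) :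
    height (B (Nat.findGreatest (fun k => height (B k) ≤ (j : ℕ∞)) n)) = (j : ℕ∞) ∧
      Nat.findGreatest (fun k => height (B k) ≤ (j : ℕ∞)) n < n ∧
      height (B (Nat.findGreatest (fun k => height (B k) ≤ (j : ℕ∞)) n + 1)) = (j : ℕ∞) + 1 := by
  set P : ℕ → Prop := fun k => height (B k) ≤ (j : ℕ∞) with hP
  set r : ℕ := Nat.findGreatest P n with hrdef
  have hP0 : P 0 := by
    show height (B 0) ≤ (j : ℕ∞)
    rw [primitive_height hfull.2.1]
    exact zero_le
  have hPr : P r := Nat.findGreatest_spec (Nat.zero_le n) hP0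
  have hrn : r ≤ n := Nat.findGreatest_le n
  have hrltn : r < n := by
    rcases eq_or_lt_of_le hrn with h | h
    · exfalso
      have : height (B n) ≤ (j : ℕ∞) := h ▸ hPr
      rw [hfull.2.2] at this
      exact absurd (lt_of_lt_of_le hj this) (lt_irrefl _)
    · exact h
  have hnP : ¬ P (r + 1) := Nat.findGreatest_is_greatest (Nat.lt_succ_self r) (by omega)
  have hgt : (j : ℕ∞) < height (B (r + 1)) := not_le.mp hnP
  have hstep : height (B (r + 1)) ≤ height (B r) + 1 := height_step (hfull.1 r hrltn)
  have hub : height (B (r + 1)) ≤ (j : ℕ∞) + 1 := hstep.trans (add_le_add_left hPr 1)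
  have hBr1 : height (B (r + 1)) = (j : ℕ∞) + 1 := by
    refine le_antisymm hub ?_
    have hjne : (j : ℕ∞) ≠ ⊤ := WithTop.coe_ne_top
    exact (ENat.add_one_le_iff hjne).mpr hgt
  have hBr : height (B r) = (j : ℕ∞) := by
    refine le_antisymm hPr ?_
    have h2 : (j : ℕ∞) + 1 ≤ height (B r) + 1 := by rw [← hBr1]; exact hstep
    exact (WithTop.add_le_add_iff_right (by simp : (1 : ℕ∞) ≠ ⊤)).mp h2
  exact ⟨hBr, hrltn, hBr1⟩

theorem backward_phylo (hmon : Monotonous V) {X : V} (hnorm : NormalVtx X)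
    (hfin : height X < ⊤) : Phylogenetic X := by
  obtain ⟨m, A, hA, hm⟩ := exists_full_of_height_lt_top hfin
  refine ⟨A, m, hA, ?_⟩
  intro B n hB
  have hXn : height X ≤ (n : ℕ∞) := height_le_of_full hB
  have hmn : m ≤ n := by rw [hm] at hXn; exact_mod_cast hXn
  refine ⟨hmn, fun j => Nat.findGreatest (fun k => height (B k) ≤ (j : ℕ∞)) n, ?_, ?_, ?_⟩
  · intro k hk
    have hjX : ((k : ℕ) : ℕ∞) < height X := by rw [hm]; exact_mod_cast hk
    obtain ⟨h1, h2, h3⟩ := jump_lemma hmon hB hjX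
    have hle : Nat.findGreatest (fun k' => height (B k') ≤ ((k : ℕ) : ℕ∞)) n + 1 ≤
        Nat.findGreatest (fun k' => height (B k') ≤ ((k + 1 : ℕ) : ℕ∞)) n := by
      apply Nat.le_findGreatest (by omega)
      show height (B _) ≤ _
      rw [h3]; push_cast; exact le_rfl
    simpa using hle
  · simpa using Nat.findGreatest_le (P := fun k => height (B k) ≤ ((m : ℕ) : ℕ∞)) n
  · intro k hk
    rcases eq_or_lt_of_le hk with hk' | hk'
    · subst hk'
      have hrm : Nat.findGreatest (fun k' => height (B k') ≤ ((k : ℕ) : ℕ∞)) n = n := by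
        refine le_antisymm (Nat.findGreatest_le n) (Nat.le_findGreatest le_rfl ?_)
        show height (B n) ≤ _
        rw [hB.2.2, hm]
      simp only [hrm]
      rw [hB.2.2, hA.2.2]
      exact isotypic_refl X
    · have hjX : ((k : ℕ) : ℕ∞) < height X := by rw [hm]; exact_mod_cast hk'
      obtain ⟨h1, h2, h3⟩ := jump_lemma hmon hB hjX
      have hAk : height (A k) = (k : ℕ∞) := short_heights hA hm (le_of_lt hk')
      have hAk1 : height (A (k + 1)) = (k : ℕ∞) + 1 := by
        rw [short_heights hA hm (by omega : k + 1 ≤ m)]; push_cast; ring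
      have c1 : CritAnc (A k) X :=
        critAnc_of_jump hA.1 hA.2.2 hk' (by rw [hAk]; exact WithTop.coe_lt_top k)
          (by rw [hAk1, hAk])
      have c2 : CritAnc (B (Nat.findGreatest (fun k' => height (B k') ≤ ((k : ℕ) : ℕ∞)) n)) X :=
        critAnc_of_jump hB.1 hB.2.2 h2 (by rw [h1]; exact WithTop.coe_lt_top k)
          (by rw [h3, h1])
      exact hnorm _ _ c1 c2 (by rw [hAk, h1])

theorem crit_isotypic (hmon : Monotonous V) {X : V} {U : ℕ → V} {mU : ℕ}
    (hUu : IsUniversalEvol U mU X) {A : V} (hA : CritAnc A X) {j : ℕ}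
    (hj : height A = (j : ℕ∞)) :
    Isotypic (U (Nat.findGreatest (fun k => height (U k) ≤ (j : ℕ∞)) mU)) A := by
  obtain ⟨hAfin, ℓ, E, hℓ, hE, hE0, hEℓ, hE1⟩ := hA
  have hE1X : Anc (E 1) X := by
    have := anc_of_evol hE (show 1 ≤ ℓ from hℓ) (le_refl ℓ)
    rwa [hEℓ] at this
  have hE1h : height (E 1) = (j : ℕ∞) + 1 := by rw [hE1, hj]
  have hjX : (j : ℕ∞) < height X := by
    have hle1 : (j : ℕ∞) + 1 ≤ height X := by
      rw [← hE1h]; exact anc_height_le hmon hE1X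
    have hlt1 : (j : ℕ∞) < (j : ℕ∞) + 1 := by
      have : ((j : ℕ) : ℕ∞) < ((j + 1 : ℕ) : ℕ∞) := by exact_mod_cast Nat.lt_succ_self j
      simpa using this
    exact lt_of_lt_of_le hlt1 hle1
  obtain ⟨j', S, hS, hj'⟩ := exists_full_of_height_lt_top hAfin
  have hj'j : j' = j := by
    have := hj'.symm.trans hj
    exact_mod_cast this
  subst hj'j
  have hSE : S j' = E 0 := hS.2.2.trans hE0.symm
  have hCfull : IsFullEvol (spliceFun S E j') (j' + ℓ) X := by
    refine ⟨spliceFun_isEvol hS.1 hE hSE, ?_, ?_⟩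
    · rw [spliceFun_left (Nat.zero_le j')]; exact hS.2.1
    · rw [spliceFun_right hSE (Nat.le_add_right _ _), Nat.add_sub_cancel_left, hEℓ]
  have hCj : spliceFun S E j' j' = A := by rw [spliceFun_left le_rfl]; exact hS.2.2
  have hCj1 : spliceFun S E j' (j' + 1) = E 1 := by
    rw [spliceFun_right hSE (Nat.le_succ j'), show j' + 1 - j' = 1 from by omega]
  have hCk : ∀ k ≤ j' + ℓ, height (spliceFun S E j' k) = (j' : ℕ∞) → k = j' := by
    intro k hkle hkh
    by_cases h1 : k ≤ j'
    · rcases eq_or_lt_of_le h1 with h | h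
      · exact h
      · exfalso
        have hck : height (spliceFun S E j' k) = (k : ℕ∞) := by
          rw [spliceFun_left h1]
          exact short_heights hS hj h1
        rw [hck] at hkh
        have : k = j' := by exact_mod_cast hkh
        omega
    · exfalso
      push_neg at h1
      have hanc : Anc (spliceFun S E j' (j' + 1)) (spliceFun S E j' k) :=
        anc_of_evol hCfull.1 (by omega) hkle
      have hge : (j' : ℕ∞) + 1 ≤ height (spliceFun S E j' k) := by
        rw [← hE1h, ← hCj1]; exact anc_height_le hmon hanc
      rw [hkh] at hge
      have : ((j' + 1 : ℕ) : ℕ∞) ≤ ((j' : ℕ) : ℕ∞) := by push_cast; exact hge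
      have : j' + 1 ≤ j' := by exact_mod_cast this
      omega
  obtain ⟨hmle, s, hsmono, hsn, hiso⟩ := hUu.2 (spliceFun S E j') (j' + ℓ) hCfull
  have hUt := (jump_lemma hmon hUu.1 hjX).1
  set t := Nat.findGreatest (fun k => height (U k) ≤ (j' : ℕ∞)) mU with ht
  have htm : t ≤ mU := Nat.findGreatest_le mU
  have hiso_t := hiso t htm
  have hst : s t ≤ j' + ℓ := le_trans (mono_of_strict hsmono t mU htm le_rfl) hsn
  have hh : height (spliceFun S E j' (s t)) = (j' : ℕ∞) := by
    rw [← isotypic_height hmon hiso_t]; exact hUt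
  have hstj : s t = j' := hCk (s t) hst hh
  rw [hstj] at hiso_t
  rwa [hCj] at hiso_t

theorem forward_phylo (hmon : Monotonous V) {X : V} (hph : Phylogenetic X) :
    NormalVtx X ∧ height X < ⊤ := by
  obtain ⟨U, mU, hUu⟩ := hph
  have hfin : height X < ⊤ :=
    lt_of_le_of_lt (height_le_of_full hUu.1) (WithTop.coe_lt_top mU)
  refine ⟨?_, hfin⟩
  intro A A' hA hA' hheq
  obtain ⟨j, hj⟩ := WithTop.ne_top_iff_exists.mp (ne_of_lt hA.1)
  have h1 := crit_isotypic hmon hUu hA hj.symm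
  have h2 := crit_isotypic hmon hUu hA' (by rw [← hheq]; exact hj.symm)
  exact isotypic_trans (isotypic_symm h1) h2


theorem stmt_12 (hmon : Monotonous V) (X : V) :
    Phylogenetic X ↔ NormalVtx X ∧ height X < ⊤ := by
  constructor
  · exact forward_phylo hmon
  · rintro ⟨hn, hf⟩
    exact backward_phylo hmon hn hf
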